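/- Let a, γ be negative real numbers and set A = √(−a), G = √(−γ) (positive reals). Define the 2×2 complex matrices Γ₁ = [[1,0],[0,1]], Γ₂ = [[iA,0],[0,−iA]], Γ₃ = [[0,iGA],[iGA,0]], Γ₄ = [[0,−G],[G,0]]. Then for all indices 1 ≤ u < v ≤ 4 and all real scalars β, β′, the matrices βΓ_u and β′Γ_v are mutually orthogonal: (βΓ_u)(β′Γ_v)† + (β′Γ_v)(βΓ_u)† = 0. -/

import Mathlib

open Matrix Complex

set_option maxHeartbeats 1000000 in
/-- The four basis weight matrices `Γ₁, Γ₂, Γ₃, Γ₄` of the SIMO relay code of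
Theorem 1 are pairwise mutually orthogonal, and this is preserved by real
scalings (`Γ_{i,j} = Γ_{i,1} β_j` with `β_j` totally real):
`(βΓ_u)(β′Γ_v)† + (β′Γ_v)(βΓ_u)† = 0` for `u < v`. -/
theorem mutually_orthogonal_weight_matrices
    (a γ : ℝ) (ha : a < 0) (hγ : γ < 0)
    (A G : ℝ) (hA : A = Real.sqrt (-a)) (hG : G = Real.sqrt (-γ))
    (Γ : Fin 4 → Matrix (Fin 2) (Fin 2) ℂ)
    (h1 : Γ 0 = !![1, 0; 0, 1])
    (h2 : Γ 1 = !![Complex.I * A, 0; 0, -(Complex.I * A)])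
    (h3 : Γ 2 = !![0, Complex.I * G * A; Complex.I * G * A, 0])
    (h4 : Γ 3 = !![0, -(G : ℂ); (G : ℂ), 0]) :
    ∀ u v : Fin 4, u < v → ∀ β β' : ℝ,
      (β • Γ u) * (β' • Γ v)ᴴ + (β' • Γ v) * (β • Γ u)ᴴ = 0 := by
  have hΓ : Γ = ![!![1, 0; 0, 1], !![Complex.I * A, 0; 0, -(Complex.I * A)],
      !![0, Complex.I * G * A; Complex.I * G * A, 0], !![0, -(G : ℂ); (G : ℂ), 0]] := by
    funext k
    fin_cases k <;> simp [h1, h2, h3, h4]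
  subst hΓ
  intro u v huv β β'
  fin_cases u <;> fin_cases v <;> first | exact absurd huv (by decide) | (
    ext i j
    fin_cases i <;> fin_cases j <;>
      simp [Matrix.mul_apply, Matrix.vecMul, dotProduct, Fin.sum_univ_succ, Matrix.conjTranspose_apply,
        Complex.ext_iff, Matrix.smul_apply, smul_eq_mul] <;> ring_nf)
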